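/- (Sub) Deducibility is closed under substitution: for every finite set A of formulas, every formula s, every variable x, and every well-typed term t of the same type as x, if A ⊢ s then A[x:=t] ⊢ s[x:=t], where [x:=t] is capture-free substitution applied to every formula. -/

import Mathlib

namespace PTT


/-- Simple types over a single base type `B`. -/
inductive Ty : Type
  | base : Ty
  | arrow : Ty → Ty → Ty
deriving DecidableEq

/-- Names: the constants `⊥` and `→`, and variables (an index together with a type). -/
inductive Name : Type
  | bot : Name
  | imp : Name
  | var : ℕ → Ty → Name
deriving DecidableEq

/-- The type of a name. -/
def Name.ty : Name → Ty
  | .bot => .base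
  | .imp => .arrow .base (.arrow .base .base)
  | .var _ σ => σ

/-- Terms: names, abstraction over a variable, application. -/
inductive Tm : Type
  | name : Name → Tm
  | lam : ℕ → Ty → Tm → Tm
  | app : Tm → Tm → Tm
deriving DecidableEq

/-- The term `⊥`. -/
def botTm : Tm := .name .bot

/-- The variable `(n, σ)` as a term. -/
def vr (n : ℕ) (σ : Ty) : Tm := .name (.var n σ)

/-- Implication `s → t`. -/
def impTm (s t : Tm) : Tm := .app (.app (.name .imp) s) t

/-- `⊤ := ⊥ → ⊥`. -/
def topTm : Tm := impTm botTm botTm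

/-- `¬ s := s → ⊥`. -/
def negTm (s : Tm) : Tm := impTm s botTm

/-- `s ∨ t := (s → t) → t`. -/
def orTm (s t : Tm) : Tm := impTm (impTm s t) t

/-- `s ∧ t := ¬(¬s ∨ ¬t)`. -/
def andTm (s t : Tm) : Tm := negTm (orTm (negTm s) (negTm t))

/-- `s ≡ t := (s → t) ∧ (t → s)`. -/
def equivTm (s t : Tm) : Tm := andTm (impTm s t) (impTm t s)

/-- The typing relation. -/
inductive HasTy : Tm → Ty → Prop
  | name (x : Name) : HasTy (.name x) x.ty
  | lam {n σ s τ} : HasTy s τ → HasTy (.lam n σ s) (.arrow σ τ)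
  | app {s t σ τ} : HasTy s (.arrow σ τ) → HasTy t σ → HasTy (.app s t) τ

/-- Free variables of a term. -/
def fv : Tm → Finset (ℕ × Ty)
  | .name (.var n σ) => {(n, σ)}
  | .name _ => ∅
  | .lam n σ s => (fv s).erase (n, σ)
  | .app s t => fv s ∪ fv t

/-- A term is closed if it has no free variables. -/
def Closed (s : Tm) : Prop := fv s = ∅

/-- Capture-free parallel substitution (bound variables are renamed). -/
def substAux (ρ : ℕ × Ty → Tm) : Tm → Tm
  | .name (.var n σ) => ρ (n, σ)
  | .name x => .name x
  | .app s t => .app (substAux ρ s) (substAux ρ t)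
  | .lam n σ s =>
      let used : Finset ℕ :=
        ((fv s).erase (n, σ)).biUnion (fun p => (fv (ρ p)).image Prod.fst)
      let m : ℕ := used.sup id + 1
      .lam m σ (substAux (Function.update ρ (n, σ) (vr m σ)) s)

/-- Capture-free substitution `s[(n,σ) := t]`. -/
def subst (s : Tm) (n : ℕ) (σ : Ty) (t : Tm) : Tm :=
  substAux (Function.update (fun p => vr p.1 p.2) (n, σ) t) s

/-- Contexts: terms with exactly one hole (possibly under binders). -/
inductive Ctx : Type
  | hole : Ctx
  | lam : ℕ → Ty → Ctx → Ctx
  | appL : Ctx → Tm → Ctx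
  | appR : Tm → Ctx → Ctx

/-- Filling the hole of a context with a term (capturing is allowed). -/
def Ctx.fill : Ctx → Tm → Tm
  | .hole, s => s
  | .lam n σ C, s => .lam n σ (C.fill s)
  | .appL C t, s => .app (C.fill s) t
  | .appR t C, s => .app t (C.fill s)

/-- `C` captures the variable `p` if the hole of `C` lies below a binder for `p`. -/
def Ctx.captures : Ctx → ℕ × Ty → Prop
  | .hole, _ => False
  | .lam n σ C, p => p = (n, σ) ∨ C.captures p
  | .appL C _, p => C.captures p
  | .appR _ C, p => C.captures p

/-- `C` is admissible for `A` if it captures no variable free in `A`. -/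
def Ctx.Admissible (C : Ctx) (A : Finset Tm) : Prop :=
  ∀ p ∈ A.biUnion fv, ¬ C.captures p

/-- `s` is a subterm of `t`. -/
def Subterm (s t : Tm) : Prop := ∃ C : Ctx, C.fill s = t

/-- β-redexes. -/
def IsBetaRedex : Tm → Prop
  | .app (.lam _ _ _) _ => True
  | _ => False

/-- A term is β-normal if none of its subterms is a β-redex. -/
def BetaNormal (t : Tm) : Prop := ∀ s, Subterm s t → ¬ IsBetaRedex s

/-- Lambda equivalence: the least equivalence on well-typed terms containing
α-, β-, η-conversion and closed under arbitrary contexts. -/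
inductive LamEq : Tm → Tm → Prop
  | refl {s σ} : HasTy s σ → LamEq s s
  | symm {s t} : LamEq s t → LamEq t s
  | trans {s t u} : LamEq s t → LamEq t u → LamEq s u
  | alpha {n m σ s τ} : HasTy (.lam n σ s) τ → (m, σ) ∉ fv s →
      LamEq (.lam n σ s) (.lam m σ (subst s n σ (vr m σ)))
  | beta {n σ s t τ} : HasTy (.app (.lam n σ s) t) τ →
      LamEq (.app (.lam n σ s) t) (subst s n σ t)
  | eta {n σ s τ} : HasTy (.lam n σ (.app s (vr n σ))) τ → (n, σ) ∉ fv s →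
      LamEq (.lam n σ (.app s (vr n σ))) s
  | ctx {s t σ} (C : Ctx) : LamEq s t → HasTy (C.fill s) σ → LamEq (C.fill s) (C.fill t)

/-- The standard set-theoretic interpretation of types: `B` is interpreted as the
two truth values (`Bool`), functional types as full function spaces. -/
def Ty.sem : Ty → Type
  | .base => Bool
  | .arrow σ τ => σ.sem → τ.sem

def Ty.semDefault : (σ : Ty) → σ.sem
  | .base => false
  | .arrow _ τ => fun _ => τ.semDefault

instance (σ : Ty) : Inhabited σ.sem := ⟨σ.semDefault⟩

noncomputable instance Ty.semFintype : (σ : Ty) → Fintype σ.sem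
  | .base => inferInstanceAs (Fintype Bool)
  | .arrow σ τ =>
      letI := Ty.semFintype σ
      letI := Ty.semFintype τ
      letI := Classical.decEq σ.sem
      inferInstanceAs (Fintype (σ.sem → τ.sem))

def Ty.semCast {σ τ : Ty} (h : σ = τ) (v : σ.sem) : τ.sem := h ▸ v

/-- An interpretation assigns to every variable a value of the corresponding type
(the constants `⊥` and `→` have their values fixed). -/
def Interp : Type := ℕ → (σ : Ty) → σ.sem

def Interp.update (I : Interp) (n : ℕ) (σ : Ty) (v : σ.sem) : Interp :=
  fun m τ => if h : m = n ∧ τ = σ then Ty.semCast h.2.symm v else I m τ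

/-- Type inference. -/
def typeOf : Tm → Option Ty
  | .name x => some x.ty
  | .lam _ σ s => (typeOf s).map (Ty.arrow σ)
  | .app s t =>
      match typeOf s, typeOf t with
      | some (.arrow σ τ), some σ' => if σ = σ' then some τ else none
      | _, _ => none

/-- The canonical extension `Î` of an interpretation to all terms: `eval I s σ`
is the value of `s` at type `σ` (on well-typed terms this is the usual
denotation; junk default values are used at type mismatches). -/
def eval (I : Interp) : Tm → (σ : Ty) → σ.sem
  | .name (.var n τ), σ => if h : τ = σ then Ty.semCast h (I n τ) else default
  | .name .bot, σ =>
      match σ with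
      | .base => false
      | _ => default
  | .name .imp, σ =>
      match σ with
      | .arrow .base (.arrow .base .base) => fun a b => !a || b
      | _ => default
  | .app s t, σ =>
      match typeOf t with
      | some τ => eval I s (.arrow τ σ) (eval I t τ)
      | none => default
  | .lam n τ s, σ =>
      match σ with
      | .base => default
      | .arrow σ₁ σ₂ =>
          if h : σ₁ = τ then
            fun a => eval (I.update n τ (Ty.semCast h a)) s σ₂
          else default

/-- `I` satisfies the formula `s` if `Î s = 1`. -/
def Satisfies (I : Interp) (s : Tm) : Prop := eval I s .base = true

/-- A formula is valid if every interpretation satisfies it. -/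
def ValidFml (s : Tm) : Prop := ∀ I : Interp, Satisfies I s

/-- A sequent `A ⇒ s` is valid if every interpretation satisfying `A` satisfies `s`. -/
def ValidSeq (A : Finset Tm) (s : Tm) : Prop :=
  ∀ I : Interp, (∀ t ∈ A, Satisfies I t) → Satisfies I s

/-- Finite disjunction (the empty disjunction is `⊥`). -/
def orList : List Tm → Tm
  | [] => botTm
  | [s] => s
  | s :: l => orTm s (orList l)

/-- Finite conjunction (the empty conjunction is `⊤`). -/
def andList : List Tm → Tm
  | [] => topTm
  | [s] => s
  | s :: l => andTm s (andList l)

/-- The argument types of a type (every type has the form `σ₁…σₙB`). -/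
def Ty.args : Ty → List Ty
  | .base => []
  | .arrow σ τ => σ :: τ.args

/-- Tuples of values along a list of types. -/
def Tup : List Ty → Type
  | [] => PUnit
  | σ :: l => σ.sem × Tup l

noncomputable instance TupFintype : (l : List Ty) → Fintype (Tup l)
  | [] => inferInstanceAs (Fintype PUnit)
  | σ :: l =>
      letI := TupFintype l
      inferInstanceAs (Fintype (σ.sem × Tup l))

/-- Applying a function value to a tuple of arguments (the result type is `B`). -/
def Ty.applyTup : (σ : Ty) → σ.sem → Tup σ.args → Bool
  | .base, a, _ => a
  | .arrow _ τ, f, p => τ.applyTup (f p.1) p.2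

/-- Quote/identity data for each type in a list: a quote function and the term `≐`. -/
def ArgData : List Ty → Type
  | [] => PUnit
  | σ :: l => ((σ.sem → Tm) × Tm) × ArgData l

/-- The conjunction list `x_k ≐_{σ_k} (↓_{σ_k} b_k), …` for a tuple `b`. -/
def eqConj : (l : List Ty) → ArgData l → ℕ → Tup l → List Tm
  | [], _, _, _ => []
  | σ :: l, (d, ds), k, (b, bs) =>
      (.app (.app d.2 (vr k σ)) (d.1 b)) :: eqConj l ds (k + 1) bs

/-- `λ x_k : σ_k. …` binding one variable for each type in the list. -/
def mkLams : (l : List Ty) → ℕ → Tm → Tm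
  | [], _, body => body
  | σ :: l, k, body => .lam k σ (mkLams l (k + 1) body)

/-- The body of the quote term
`↓_{σ₁…σₙB} a := λx₁…xₙ. ⋁_{b₁…bₙ, a b₁…bₙ = 1} ⋀_j x_j ≐_{σ_j} (↓_{σ_j} b_j)`. -/
noncomputable def quoteBodyAux (σ : Ty) (ad : ArgData σ.args) (a : σ.sem) : Tm :=
  mkLams σ.args 0 (orList
    ((((Finset.univ : Finset (Tup σ.args)).toList.filter
        (fun b => σ.applyTup a b))).map
      (fun b => andList (eqConj σ.args ad 0 b))))

/-- `∀σ := λf. ⋀_{a ∈ Bσ} f (↓σ a)`, given the quote function for `σ`. -/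
noncomputable def allTmAux (σ : Ty) (q : σ.sem → Tm) : Tm :=
  .lam 0 (.arrow σ .base)
    (andList (((Finset.univ : Finset σ.sem).toList).map
      (fun a => .app (vr 0 (.arrow σ .base)) (q a))))

mutual
  /-- The quote function `↓σ` together with the identity term `≐σ`. -/
  noncomputable def quoteEq : (σ : Ty) → ((σ.sem → Tm) × Tm)
    | .base =>
        (fun a => quoteBodyAux .base PUnit.unit a,
         .lam 0 .base (.lam 1 .base (equivTm (vr 0 .base) (vr 1 .base))))
    | .arrow σ τ =>
        (fun a => quoteBodyAux (.arrow σ τ) ((quoteEq σ, argData τ) : ArgData (σ :: τ.args)) a,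
         .lam 0 (.arrow σ τ) (.lam 1 (.arrow σ τ)
           (.app (allTmAux σ (quoteEq σ).1)
             (.lam 2 σ
               (.app (.app (quoteEq τ).2
                  (.app (vr 0 (.arrow σ τ)) (vr 2 σ)))
                (.app (vr 1 (.arrow σ τ)) (vr 2 σ)))))))
  /-- Quote/identity data for all argument types of a type. -/
  noncomputable def argData : (σ : Ty) → ArgData σ.args
    | .base => PUnit.unit
    | .arrow σ τ => ((quoteEq σ, argData τ) : ArgData (σ :: τ.args))
end

/-- The quote function `↓σ : Bσ → Λ`. -/
noncomputable def quote (σ : Ty) (a : σ.sem) : Tm := (quoteEq σ).1 a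

/-- The term `≐σ : σσB` denoting the identity predicate on `Bσ`. -/
noncomputable def eqTm (σ : Ty) : Tm := (quoteEq σ).2

/-- The term `∀σ : (σB)B`. -/
noncomputable def allTm (σ : Ty) : Tm := allTmAux σ (quote σ)


/-- Propositional formulas: `s ::= x | ⊥ | s → s` with `x` a variable of type `B`. -/
inductive Propositional : Tm → Prop
  | var (n : ℕ) : Propositional (vr n .base)
  | bot : Propositional botTm
  | imp {s t} : Propositional s → Propositional t → Propositional (impTm s t)

/-- A type-respecting substitution of terms for variables. -/
def IsSubstitution (ρ : ℕ × Ty → Tm) : Prop := ∀ n σ, HasTy (ρ (n, σ)) σ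

/-- A formula is tautologous if it is a substitution instance of a tautology
(a valid propositional formula). -/
def Tautologous (s : Tm) : Prop :=
  ∃ t ρ, Propositional t ∧ ValidFml t ∧ IsSubstitution ρ ∧ s = substAux ρ t

/-- The proof system: Triv, Weak, Ded, MP, DN, Lam and Boolean replacement (BR).
Sequents consist of a finite set of formulas and a formula. -/
inductive Ded : Finset Tm → Tm → Prop
  | triv {A s} : (∀ t ∈ A, HasTy t .base) → HasTy s .base → Ded (insert s A) s
  | weak {A s t} : HasTy s .base → Ded A t → Ded (insert s A) t
  | ded {A s t} : Ded (insert s A) t → Ded A (impTm s t)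
  | mp {A s t} : Ded A (impTm s t) → Ded A s → Ded A t
  | dn {A s} : Ded A (negTm (negTm s)) → Ded A s
  | lam {A s t} : Ded A s → LamEq s t → HasTy t .base → Ded A t
  | br {A s t} (C : Ctx) : C.Admissible A → Ded A (equivTm s t) →
      Ded A (C.fill s) → HasTy (C.fill t) .base → Ded A (C.fill t)


-- auxiliary lemmas, to be inserted before `theorem sub`

theorem hasTy_unique {s : Tm} {σ τ : Ty} (h1 : HasTy s σ) (h2 : HasTy s τ) : σ = τ := by
  induction h1 generalizing τ with
  | name x => cases h2; rfl
  | lam _ ih => cases h2 with | lam h => rw [ih h]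
  | app _ _ ih1 ih2 =>
      cases h2 with
      | app hf ha => exact (Ty.arrow.injEq _ _ _ _ ▸ ih1 hf).2

theorem hasTy_imp {a b : Tm} (ha : HasTy a .base) (hb : HasTy b .base) :
    HasTy (impTm a b) .base :=
  HasTy.app (HasTy.app (HasTy.name .imp) ha) hb

theorem impTy_inv {a b : Tm} (h : HasTy (impTm a b) .base) :
    HasTy a .base ∧ HasTy b .base := by
  cases h with
  | app h1 h2 =>
    cases h1 with
    | app h3 h4 =>
      have := hasTy_unique h3 (HasTy.name .imp)
      obtain ⟨h5, h6⟩ := Ty.arrow.injEq _ _ _ _ ▸ this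
      obtain ⟨h7, h8⟩ := Ty.arrow.injEq _ _ _ _ ▸ h6
      exact ⟨h5 ▸ h4, h7 ▸ h2⟩

theorem ded_ty {A : Finset Tm} {s : Tm} (h : Ded A s) :
    (∀ u ∈ A, HasTy u .base) ∧ HasTy s .base := by
  induction h with
  | triv hA hs =>
      refine ⟨fun u hu => ?_, hs⟩
      rcases Finset.mem_insert.1 hu with rfl | hu
      · exact hs
      · exact hA u hu
  | weak hs _ ih =>
      refine ⟨fun u hu => ?_, ih.2⟩
      rcases Finset.mem_insert.1 hu with rfl | hu
      · exact hs
      · exact ih.1 u hu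
  | ded _ ih =>
      exact ⟨fun u hu => ih.1 u (Finset.mem_insert_of_mem hu),
        hasTy_imp (ih.1 _ (Finset.mem_insert_self _ _)) ih.2⟩
  | mp _ _ ih1 ih2 => exact ⟨ih1.1, (impTy_inv ih1.2).2⟩
  | dn _ ih => exact ⟨ih.1, (impTy_inv (impTy_inv ih.2).1).1⟩
  | lam _ _ hty ih => exact ⟨ih.1, hty⟩
  | br C _ _ _ hty ih1 _ => exact ⟨ih1.1, hty⟩

theorem isSubst_update {ρ : ℕ × Ty → Tm} (hρ : IsSubstitution ρ) (n m : ℕ) (σ : Ty) :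
    IsSubstitution (Function.update ρ (n, σ) (vr m σ)) := by
  intro k τ
  rw [Function.update_apply]
  split_ifs with hc
  · simp only [Prod.mk.injEq] at hc
    obtain ⟨rfl, rfl⟩ := hc
    exact HasTy.name _
  · exact hρ k τ

theorem substAux_ty {s : Tm} {τ : Ty} (h : HasTy s τ) :
    ∀ {ρ : ℕ × Ty → Tm}, IsSubstitution ρ → HasTy (substAux ρ s) τ := by
  induction h with
  | name x =>
      intro ρ hρ
      cases x with
      | bot => exact HasTy.name _
      | imp => exact HasTy.name _
      | var k τ => exact hρ k τ
  | lam _ ih =>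
      intro ρ hρ
      simp only [substAux]
      exact HasTy.lam (ih (isSubst_update hρ _ _ _))
  | app _ _ ih1 ih2 =>
      intro ρ hρ
      exact HasTy.app (ih1 hρ) (ih2 hρ)

theorem isSubst_single {n : ℕ} {σ : Ty} {t : Tm} (ht : HasTy t σ) :
    IsSubstitution (Function.update (fun p => vr p.1 p.2) (n, σ) t) := by
  intro k τ
  rw [Function.update_apply]
  split_ifs with hc
  · simp only [Prod.mk.injEq] at hc
    obtain ⟨rfl, rfl⟩ := hc
    exact ht
  · exact HasTy.name _

theorem subst_ty {s : Tm} (hs : HasTy s .base) {n : ℕ} {σ : Ty} {t : Tm} (ht : HasTy t σ) :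
    HasTy (subst s n σ t) .base :=
  substAux_ty hs (isSubst_single ht)

theorem subst_imp (a b : Tm) (n : ℕ) (σ : Ty) (t : Tm) :
    subst (impTm a b) n σ t = impTm (subst a n σ t) (subst b n σ t) := rfl

theorem subst_top (n : ℕ) (σ : Ty) (t : Tm) : subst topTm n σ t = topTm := rfl

/-- Nested implications, peeled from the inside out. -/
def impList : List Tm → Tm → Tm
  | [], s => s
  | a :: L, s => impList L (impTm a s)

theorem impList_ty {L : List Tm} {s : Tm} (hL : ∀ a ∈ L, HasTy a .base)
    (hs : HasTy s .base) : HasTy (impList L s) .base := by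
  induction L generalizing s with
  | nil => exact hs
  | cons a L ih =>
      exact ih (fun b hb => hL b (List.mem_cons_of_mem _ hb))
        (hasTy_imp (hL a List.mem_cons_self) hs)

theorem subst_impList (L : List Tm) (s : Tm) (n : ℕ) (σ : Ty) (t : Tm) :
    subst (impList L s) n σ t
      = impList (L.map (fun u => subst u n σ t)) (subst s n σ t) := by
  induction L generalizing s with
  | nil => rfl
  | cons a L ih => simp [impList, ih, subst_imp]

theorem discharge {L : List Tm} {s : Tm} (h : Ded L.toFinset s) : Ded ∅ (impList L s) := by
  induction L generalizing s with
  | nil => simpa [impList] using h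
  | cons a L ih =>
      apply ih
      apply Ded.ded
      simpa using h

theorem reintro {L : List Tm} {B : Finset Tm} {s : Tm}
    (hL : ∀ a ∈ L, Ded B a) (h : Ded B (impList L s)) : Ded B s := by
  induction L generalizing s with
  | nil => exact h
  | cons a L ih =>
      exact Ded.mp (ih (fun b hb => hL b (List.mem_cons_of_mem _ hb)) h)
        (hL a List.mem_cons_self)

theorem weaken_empty {s : Tm} (h : Ded ∅ s) (B : Finset Tm)
    (hB : ∀ u ∈ B, HasTy u .base) : Ded B s := by
  induction B using Finset.induction_on with
  | empty => exact h
  | @insert a B hna ih =>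
      exact Ded.weak (hB a (Finset.mem_insert_self _ _))
        (ih fun u hu => hB u (Finset.mem_insert_of_mem hu))

theorem triv' {B : Finset Tm} {a : Tm} (ha : a ∈ B)
    (hB : ∀ u ∈ B, HasTy u .base) : Ded B a := by
  rw [← Finset.insert_erase ha]
  exact Ded.triv (fun u hu => hB u (Finset.mem_of_mem_erase hu)) (hB a ha)

theorem top_ded : Ded ∅ topTm :=
  Ded.ded (Ded.triv (fun u hu => absurd hu (Finset.notMem_empty u)) (HasTy.name .bot))

theorem equiv_top {u : Tm} (hu : Ded ∅ u) (tu : HasTy u .base) :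
    Ded ∅ (equivTm topTm u) := by
  have tTop : HasTy topTm .base := hasTy_imp (HasTy.name .bot) (HasTy.name .bot)
  have tBot : HasTy botTm .base := HasTy.name .bot
  set P := impTm topTm u with hP
  set Q := impTm u topTm with hQ
  have tP : HasTy P .base := hasTy_imp tTop tu
  have tQ : HasTy Q .base := hasTy_imp tu tTop
  have tnP : HasTy (negTm P) .base := hasTy_imp tP tBot
  have tnQ : HasTy (negTm Q) .base := hasTy_imp tQ tBot
  set H := impTm (impTm (negTm P) (negTm Q)) (negTm Q) with hH
  have tH : HasTy H .base := hasTy_imp (hasTy_imp tnP tnQ) tnQ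
  have dP : Ded ∅ P := Ded.ded (Ded.weak tTop hu)
  have dQ : Ded ∅ Q := Ded.ded (Ded.weak tu top_ded)
  have h1 : Ded (insert (negTm P) {H}) P := Ded.weak tnP (Ded.weak tH dP)
  have h2 : Ded (insert (negTm P) {H}) (negTm P) :=
    Ded.triv (fun v hv => by simp only [Finset.mem_singleton] at hv; exact hv ▸ tH) tnP
  have h3 : Ded (insert (negTm P) {H}) botTm := Ded.mp h2 h1
  have h4 : Ded {H} (impTm (negTm P) (negTm Q)) := Ded.ded (Ded.ded (Ded.weak tQ h3))
  have h6 : Ded (insert H (∅ : Finset Tm)) H :=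
    Ded.triv (fun v hv => absurd hv (Finset.notMem_empty v)) tH
  have h7 : Ded {H} (negTm Q) := Ded.mp (by simpa using h6) h4
  have h8 : Ded {H} Q := Ded.weak tH dQ
  have h9 : Ded (insert H (∅ : Finset Tm)) botTm := by
    simpa using Ded.mp h7 h8
  exact Ded.ded h9


/-- Sub: deducibility is closed under capture-free substitution of a
term `t` (of the same type as the variable `(n, σ)`) throughout the sequent. -/
theorem sub (A : Finset Tm) (s : Tm) (n : ℕ) (σ : Ty) (t : Tm)
    (ht : HasTy t σ) (h : Ded A s) :
    Ded (A.image (fun u => subst u n σ t)) (subst s n σ t) := by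
  obtain ⟨hAty, hsty⟩ := ded_ty h
  set L := A.toList with hLdef
  have hL : L.toFinset = A := Finset.toList_toFinset A
  have hLty : ∀ a ∈ L, HasTy a .base := fun a haL => hAty a (by rwa [← hL, List.mem_toFinset])
  set u := impList L s with hu
  have hdis : Ded ∅ u := discharge (by rw [hL]; exact h)
  have tu : HasTy u .base := impList_ty hLty hsty
  have hequiv : Ded ∅ (equivTm topTm u) := equiv_top hdis tu
  set C : Ctx := Ctx.appL (Ctx.lam n σ .hole) t with hC
  have hadm : C.Admissible ∅ := by
    intro p hp
    simp at hp
  have tfillTop : HasTy (C.fill topTm) .base :=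
    HasTy.app (HasTy.lam (hasTy_imp (HasTy.name .bot) (HasTy.name .bot))) ht
  have hfillTop : Ded ∅ (C.fill topTm) := by
    refine Ded.lam top_ded ?_ tfillTop
    have hb : LamEq (Tm.app (Tm.lam n σ topTm) t) (subst topTm n σ t) :=
      LamEq.beta (τ := .base) tfillTop
    rw [subst_top] at hb
    exact hb.symm
  have tfillU : HasTy (C.fill u) .base := HasTy.app (HasTy.lam tu) ht
  have hfillU : Ded ∅ (C.fill u) := Ded.br C hadm hequiv hfillTop tfillU
  have tsu : HasTy (subst u n σ t) .base := subst_ty tu ht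
  have hsubU : Ded ∅ (subst u n σ t) :=
    Ded.lam hfillU (LamEq.beta (τ := .base) tfillU) tsu
  rw [hu, subst_impList] at hsubU
  set B := A.image (fun u => subst u n σ t) with hB
  have hBL : (L.map (fun u => subst u n σ t)).toFinset = B := by
    rw [hB, ← hL]
    ext v
    simp
  have hBty : ∀ v ∈ B, HasTy v .base := by
    intro v hv
    rw [hB, Finset.mem_image] at hv
    obtain ⟨a, ha, rfl⟩ := hv
    exact subst_ty (hAty a ha) ht
  have hbase : Ded B (impList (L.map (fun u => subst u n σ t)) (subst s n σ t)) :=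
    weaken_empty hsubU B hBty
  refine reintro ?_ hbase
  intro a haL
  exact triv' (by rw [← hBL]; exact List.mem_toFinset.2 haL) hBty


end PTT
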